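/- For all integers l, j, l′, j′ ≥ 0 with l + jm ≤ n and l′ + j′m ≤ n, the strict inclusion X_{l′,j′} ⊊ X_{l,j} holds if and only if X_{l′,j′} ⊆ X_{l+1,j} ∪ X_{l,j+1} ∪ X_{l+m,j−1} (where any of the three sets whose parameters are out of range is empty). -/

import Mathlib

/- Statement 2: criterion for strict inclusion of the strata `X_{l,j} ⊆ ℂ^n`. -/

/-- The stratum `X_{l,j} ⊆ ℂ^n`: the set of points having `l` coordinates equal to `0`
and `j` further disjoint collections of `m` coordinates which differ from each other by
`ℓ`-th roots of unity.  (For `l < 0`, `j < 0` or `l + jm > n` the set is empty.) -/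
def Xset (n ℓ m : ℕ) (l j : ℤ) : Set (Fin n → ℂ) :=
  {x | ∃ (Z : Finset (Fin n)) (k : ℕ) (B : Fin k → Finset (Fin n)),
    (Z.card : ℤ) = l ∧ (k : ℤ) = j ∧ (∀ t, (B t).card = m) ∧
    (∀ t, Disjoint Z (B t)) ∧ (∀ t t', t ≠ t' → Disjoint (B t) (B t')) ∧
    (∀ i ∈ Z, x i = 0) ∧
    (∀ t, ∀ i ∈ B t, ∀ i' ∈ B t, ∃ γ : ℂ, γ ^ ℓ = 1 ∧ x i = γ * x i')}

namespace S2

def XN (n ℓ m a b : ℕ) : Set (Fin n → ℂ) :=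
  {x | ∃ (Z : Finset (Fin n)) (B : Fin b → Finset (Fin n)),
    Z.card = a ∧ (∀ t, (B t).card = m) ∧
    (∀ t, Disjoint Z (B t)) ∧ (∀ t t', t ≠ t' → Disjoint (B t) (B t')) ∧
    (∀ i ∈ Z, x i = 0) ∧
    (∀ t, ∀ i ∈ B t, ∀ i' ∈ B t, ∃ γ : ℂ, γ ^ ℓ = 1 ∧ x i = γ * x i')}

lemma Xset_cast (n ℓ m a b : ℕ) : Xset n ℓ m a b = XN n ℓ m a b := by
  ext x
  constructor
  · rintro ⟨Z, k, B, hZ, hk, h⟩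
    have hk' : k = b := by exact_mod_cast hk
    subst hk'
    exact ⟨Z, B, by exact_mod_cast hZ, h⟩
  · rintro ⟨Z, B, hZ, h⟩
    exact ⟨Z, b, B, by exact_mod_cast hZ, rfl, h⟩

lemma Xset_neg (n ℓ m : ℕ) (l j : ℤ) (hj : j < 0) : Xset n ℓ m l j = ∅ := by
  ext x
  simp only [Set.mem_empty_iff_false, iff_false]
  rintro ⟨Z, k, B, hZ, hk, h⟩
  omega

lemma XN_mono (n ℓ m a b a' b' : ℕ) (ha : a' ≤ a) (hb : b' ≤ b) :
    XN n ℓ m a b ⊆ XN n ℓ m a' b' := by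
  rintro x ⟨Z, B, hZ, hB, hZB, hBB, hz, hr⟩
  obtain ⟨Z', hZ'sub, hZ'card⟩ := Finset.exists_subset_card_eq (s := Z) (n := a') (by omega)
  refine ⟨Z', fun t => B (Fin.castLE hb t), hZ'card, fun t => hB _,
    fun t => Disjoint.mono_left hZ'sub (hZB _),
    fun t t' htt => hBB _ _ (fun h => htt (Fin.castLE_injective hb h)),
    fun i hi => hz i (hZ'sub hi), fun t => hr _⟩

lemma XN_convert (n ℓ m a b : ℕ) : XN n ℓ m (a + m) b ⊆ XN n ℓ m a (b + 1) := by
  rintro x ⟨Z, B, hZ, hB, hZB, hBB, hz, hr⟩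
  obtain ⟨Z', hZ'sub, hZ'card⟩ := Finset.exists_subset_card_eq (s := Z) (n := a) (by omega)
  set W : Finset (Fin n) := Z \ Z' with hW
  have hWcard : W.card = m := by
    rw [hW, Finset.card_sdiff_of_subset hZ'sub, hZ, hZ'card]; omega
  have hWsub : W ⊆ Z := Finset.sdiff_subset
  refine ⟨Z', Fin.snoc B W, hZ'card, ?_, ?_, ?_, fun i hi => hz i (hZ'sub hi), ?_⟩
  · intro t
    refine Fin.lastCases ?_ ?_ t
    · simp [hWcard]
    · intro t'; simp [hB t']
  · intro t
    refine Fin.lastCases ?_ ?_ t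
    · simpa using Finset.disjoint_sdiff
    · intro t'; simpa using Disjoint.mono_left hZ'sub (hZB t')
  · intro t t' htt
    rcases Fin.eq_castSucc_or_eq_last t with ⟨u, rfl⟩ | rfl <;>
      rcases Fin.eq_castSucc_or_eq_last t' with ⟨u', rfl⟩ | rfl
    · have : u ≠ u' := fun h => htt (by rw [h])
      simpa using hBB u u' this
    · simpa using (Disjoint.mono_left hWsub (hZB u)).symm
    · simpa using Disjoint.mono_left hWsub (hZB u')
    · exact absurd rfl htt
  · intro t
    refine Fin.lastCases ?_ ?_ t
    · intro i hi i' hi'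
      simp only [Fin.snoc_last] at hi hi'
      exact ⟨1, one_pow ℓ, by rw [hz i (hWsub hi), hz i' (hWsub hi')]; ring⟩
    · intro t' i hi i' hi'
      simp only [Fin.snoc_castSucc] at hi hi'
      exact hr t' i hi i' hi'

lemma XN_chain (n ℓ m : ℕ) : ∀ (s a b a' b' : ℕ), a' + s * m ≤ a → b' ≤ b + s →
    XN n ℓ m a b ⊆ XN n ℓ m a' b' := by
  intro s
  induction s with
  | zero => intro a b a' b' h1 h2; exact XN_mono n ℓ m a b a' b' (by omega) (by omega)
  | succ s ih =>
    intro a b a' b' h1 h2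
    rcases Nat.eq_zero_or_eq_succ_pred b' with hb' | hb'
    · subst hb'; exact XN_mono n ℓ m a b a' 0 (by nlinarith) (by omega)
    · rw [hb']
      refine subset_trans (ih a b (a' + m) (b' - 1) (by simp [Nat.succ_mul] at h1; omega) (by omega)) ?_
      exact XN_convert n ℓ m a' (b' - 1)

/-- value pattern of the generic point -/
def gv (l j m i : ℕ) : ℕ :=
  if i < l then 0 else if i < l + j * m then (i - l) / m + 2 else i + 2

def gp (n l j m : ℕ) : Fin n → ℂ := fun i => (gv l j m i.val : ℂ)

lemma gv_eq_zero_iff (l j m i : ℕ) : gv l j m i = 0 ↔ i < l := by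
  unfold gv
  split_ifs with h1 h2 <;> simp [h1]

lemma gp_mem (n ℓ m l j : ℕ) (hm : 1 ≤ m) (h : l + j * m ≤ n) :
    gp n l j m ∈ XN n ℓ m l j := by
  have hln : l ≤ n := by nlinarith
  refine ⟨(Finset.range l).attachFin (fun i hi => lt_of_lt_of_le (Finset.mem_range.mp hi) hln),
    fun t => (Finset.Ico (l + t.val * m) (l + t.val * m + m)).attachFin
      (fun i hi => by
        have := (Finset.mem_Ico.mp hi).2
        have ht : t.val + 1 ≤ j := t.isLt
        have : i < l + j * m := by nlinarith
        omega),
    ?_, ?_, ?_, ?_, ?_, ?_⟩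
  · rw [Finset.card_attachFin, Finset.card_range]
  · intro t; rw [Finset.card_attachFin, Nat.card_Ico]; omega
  · intro t
    rw [Finset.disjoint_left]
    intro i hi hi'
    rw [Finset.mem_attachFin, Finset.mem_range] at hi
    rw [Finset.mem_attachFin, Finset.mem_Ico] at hi'
    omega
  · intro t t' htt
    rw [Finset.disjoint_left]
    intro i hi hi'
    rw [Finset.mem_attachFin, Finset.mem_Ico] at hi hi'
    have : t.val ≠ t'.val := fun h => htt (Fin.ext h)
    rcases Nat.lt_or_ge t.val t'.val with h' | h'
    · have : t.val * m + m ≤ t'.val * m := by nlinarith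
      omega
    · have h'' : t'.val < t.val := by omega
      have : t'.val * m + m ≤ t.val * m := by nlinarith
      omega
  · intro i hi
    rw [Finset.mem_attachFin, Finset.mem_range] at hi
    simp [gp, gv, hi]
  · intro t i hi i' hi'
    rw [Finset.mem_attachFin, Finset.mem_Ico] at hi hi'
    refine ⟨1, one_pow ℓ, ?_⟩
    have hval : ∀ y : Fin n, l + t.val * m ≤ y.val → y.val < l + t.val * m + m →
        gv l j m y.val = t.val + 2 := by
      intro y h1 h2
      have ht : t.val + 1 ≤ j := t.isLt
      have hy1 : ¬ y.val < l := by omega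
      have hy2 : y.val < l + j * m := by nlinarith
      have hdiv : (y.val - l) / m = t.val := by
        have h3 : t.val * m ≤ y.val - l := by omega
        have h4 : y.val - l < (t.val + 1) * m := by
          rw [Nat.add_mul, one_mul]; omega
        exact Nat.div_eq_of_lt_le (by omega) h4
      simp [gv, hy1, hy2, hdiv]
    rw [one_mul]
    unfold gp
    rw [hval i hi.1 hi.2, hval i' hi'.1 hi'.2]

lemma rel_nat_eq (ℓ : ℕ) (hℓ : 1 ≤ ℓ) (γ : ℂ) (hγ : γ ^ ℓ = 1) (a b : ℕ)
    (h : (a : ℂ) = γ * b) : a = b := by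
  have h1 : ‖γ‖ ^ ℓ = 1 := by rw [← norm_pow, hγ, norm_one]
  have h2 : ‖γ‖ = 1 := by
    rcases (pow_eq_one_iff_cases).mp h1 with h | h | h
    · omega
    · exact h
    · nlinarith [norm_nonneg γ, h.1]
  have h3 : (a : ℝ) = (b : ℝ) := by
    have := congrArg norm h
    rwa [norm_mul, h2, one_mul, Complex.norm_natCast, Complex.norm_natCast] at this
  exact_mod_cast h3

lemma card_val_lt_le (n l : ℕ) :
    (Finset.univ.filter (fun i : Fin n => i.val < l)).card ≤ l := by
  calc (Finset.univ.filter (fun i : Fin n => i.val < l)).card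
      ≤ (Finset.range l).card := by
        refine Finset.card_le_card_of_injOn Fin.val ?_ ?_
        · intro i hi
          simp only [Finset.coe_filter, Finset.mem_coe, Finset.mem_filter, Set.mem_setOf_eq] at hi ⊢
          exact Finset.mem_range.mpr hi.2
        · intro i _ i' _ h; exact Fin.ext h
    _ = l := Finset.card_range l

lemma card_val_interval_le (n c m : ℕ) :
    (Finset.univ.filter (fun i : Fin n => c ≤ i.val ∧ i.val < c + m)).card ≤ m := by
  calc (Finset.univ.filter (fun i : Fin n => c ≤ i.val ∧ i.val < c + m)).card
      ≤ (Finset.Ico c (c + m)).card := by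
        refine Finset.card_le_card_of_injOn Fin.val ?_ ?_
        · intro i hi
          simp only [Finset.coe_filter, Finset.mem_coe, Finset.mem_filter, Set.mem_setOf_eq] at hi ⊢
          exact Finset.mem_Ico.mpr hi.2
        · intro i _ i' _ h; exact Fin.ext h
    _ = m := by rw [Nat.card_Ico]; omega

lemma gv_far_val (l j m x : ℕ) (hx : l + j * m ≤ x) : gv l j m x = x + 2 := by
  unfold gv
  rw [if_neg (by omega), if_neg (by omega)]

lemma gv_far (l j m x y : ℕ) (hm : 1 ≤ m) (hx : l + j * m ≤ x)
    (h : gv l j m y = x + 2) : y = x := by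
  have hjm : j ≤ j * m := Nat.le_mul_of_pos_right j hm
  unfold gv at h
  rcases Nat.lt_or_ge y l with h1 | h1
  · rw [if_pos h1] at h; omega
  rcases Nat.lt_or_ge y (l + j * m) with h2 | h2
  · rw [if_neg (by omega), if_pos h2] at h
    have hd : (y - l) / m < j := by rw [Nat.div_lt_iff_lt_mul hm]; omega
    omega
  · rw [if_neg (by omega), if_neg (by omega)] at h
    omega

lemma gv_mid (l j m x y : ℕ) (hm : 1 ≤ m) (hjm : j ≤ j * m) (hx : x < j)
    (hy1 : l ≤ y) (hy2 : y < l + j * m) (h : gv l j m y = x + 2) :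
    l + x * m ≤ y ∧ y < l + x * m + m := by
  unfold gv at h
  rw [if_neg (by omega), if_pos hy2] at h
  have hdiv : (y - l) / m = x := Nat.add_right_cancel h
  have h5 : x * m ≤ y - l := by rw [← hdiv]; exact Nat.div_mul_le_self _ _
  have h6 : y - l < x * m + m := by
    have h6' : y - l < (x + 1) * m :=
      (Nat.div_lt_iff_lt_mul hm).mp (by rw [hdiv]; omega)
    rw [Nat.add_mul, one_mul] at h6'
    exact h6'
  have key : ∀ q : ℕ, q ≤ y - l → y - l < q + m → l ≤ y →
      l + q ≤ y ∧ y < l + q + m := by intro q u1 u2 u3; omega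
  exact key (x * m) h5 h6 hy1

lemma gp_anal (n ℓ m l j a b : ℕ) (hℓ : 1 ≤ ℓ) (hm2 : 2 ≤ m)
    (hmem : gp n l j m ∈ XN n ℓ m a b) : ∃ s, a + s * m ≤ l ∧ b ≤ j + s := by
  have hm : 1 ≤ m := by omega
  obtain ⟨Z, B, hZ, hB, hZB, hBB, hz, hr⟩ := hmem
  have hjm : j ≤ j * m := Nat.le_mul_of_pos_right j hm
  -- values are constant on blocks
  have hconst : ∀ t, ∀ i ∈ B t, ∀ i' ∈ B t, gv l j m i.val = gv l j m i'.val := by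
    intro t i hi i' hi'
    obtain ⟨γ, hγ, hrel⟩ := hr t i hi i' hi'
    exact rel_nat_eq ℓ hℓ γ hγ _ _ hrel
  -- a nonzero block lies in a middle interval
  have hblock : ∀ t : Fin b, (¬ ∀ i ∈ B t, i.val < l) →
      ∃ t₀, t₀ < j ∧ ∀ i ∈ B t, l + t₀ * m ≤ i.val ∧ i.val < l + t₀ * m + m := by
    intro t ht
    push_neg at ht
    obtain ⟨i₀, hi₀, hi₀l⟩ := ht
    -- i₀ is in the middle region
    have hi₀mid : i₀.val < l + j * m := by
      by_contra hfar
      push_neg at hfar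
      obtain ⟨i₁, hi₁, hi₁ne⟩ := Finset.exists_mem_ne (by rw [hB t]; omega) i₀
      have hv : gv l j m i₁.val = i₀.val + 2 := by
        rw [hconst t i₁ hi₁ i₀ hi₀]
        exact gv_far_val l j m i₀.val hfar
      exact hi₁ne (Fin.ext (gv_far l j m i₀.val i₁.val hm hfar hv))
    refine ⟨(i₀.val - l) / m, by rw [Nat.div_lt_iff_lt_mul hm]; omega, ?_⟩
    have hv₀ : gv l j m i₀.val = (i₀.val - l) / m + 2 := by
      unfold gv; rw [if_neg (by omega), if_pos hi₀mid]
    intro i hi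
    have hv : gv l j m i.val = (i₀.val - l) / m + 2 := by
      rw [hconst t i hi i₀ hi₀]; exact hv₀
    have hil : l ≤ i.val := by
      rcases Nat.lt_or_ge i.val l with h | h
      · exfalso
        have h0 : gv l j m i.val = 0 := (gv_eq_zero_iff l j m i.val).mpr h
        rw [h0] at hv
        exact Nat.succ_ne_zero _ hv.symm
      · exact h
    have himid : i.val < l + j * m := by
      by_contra hfar
      push_neg at hfar
      rw [gv_far_val l j m i.val hfar] at hv
      have hd : (i₀.val - l) / m < j := by rw [Nat.div_lt_iff_lt_mul hm]; omega
      have h8 : i.val = (i₀.val - l) / m := Nat.add_right_cancel hv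
      have h9 : i.val < j := by rw [h8]; exact hd
      omega
    exact gv_mid l j m ((i₀.val - l) / m) i.val hm hjm
      (by rw [Nat.div_lt_iff_lt_mul hm]; omega) hil himid hv
  -- split blocks into zero blocks and middle blocks
  set S := Finset.univ.filter (fun t : Fin b => ∀ i ∈ B t, i.val < l) with hS
  refine ⟨S.card, ?_, ?_⟩
  · -- count points with value zero
    have hdisjZ : Disjoint Z (S.biUnion B) := by
      rw [Finset.disjoint_biUnion_right]
      intro t _
      exact hZB t
    have hcardbi : (S.biUnion B).card = S.card * m := by
      rw [Finset.card_biUnion (fun t _ t' _ htt => hBB t t' htt)]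
      rw [Finset.sum_congr rfl (fun t _ => hB t), Finset.sum_const, smul_eq_mul]
    have hsub : Z ∪ S.biUnion B ⊆ Finset.univ.filter (fun i : Fin n => i.val < l) := by
      intro i hi
      rcases Finset.mem_union.mp hi with hi | hi
      · have h' := hz i hi
        simp only [gp] at h'
        have : gv l j m i.val = 0 := by exact_mod_cast h'
        simp only [Finset.mem_filter, Finset.mem_univ, true_and]
        exact (gv_eq_zero_iff l j m i.val).mp this
      · obtain ⟨t, htS, hit⟩ := Finset.mem_biUnion.mp hi
        rw [hS, Finset.mem_filter] at htS
        simp only [Finset.mem_filter, Finset.mem_univ, true_and]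
        exact htS.2 i hit
    have := le_trans (Finset.card_le_card hsub) (card_val_lt_le n l)
    rw [Finset.card_union_of_disjoint hdisjZ, hZ, hcardbi] at this
    exact this
  · -- count middle blocks
    classical
    set Sc := Finset.univ.filter (fun t : Fin b => ¬ ∀ i ∈ B t, i.val < l) with hSc
    have hsplit : S.card + Sc.card = b := by
      rw [hS, hSc, Finset.card_filter_add_card_filter_not]
      simp
    have hScj : Sc.card ≤ j := by
      set f : Fin b → ℕ := fun t =>
        if h : ∃ t₀, t₀ < j ∧ ∀ i ∈ B t, l + t₀ * m ≤ i.val ∧ i.val < l + t₀ * m + m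
        then h.choose else 0 with hf
      have hft : ∀ t ∈ Sc, f t < j ∧ ∀ i ∈ B t, l + f t * m ≤ i.val ∧ i.val < l + f t * m + m := by
        intro t ht
        rw [hSc, Finset.mem_filter] at ht
        have hex := hblock t ht.2
        rw [hf]
        simp only [dif_pos hex]
        exact hex.choose_spec
      calc Sc.card ≤ (Finset.range j).card := by
            refine Finset.card_le_card_of_injOn f ?_ ?_
            · intro t ht; exact Finset.mem_range.mpr (hft t ht).1
            · intro t ht t' ht' hff
              by_contra htt
              have h1 := (hft t ht).2
              have h2 := (hft t' ht').2
              rw [hff] at h1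
              have hsubD : B t ∪ B t' ⊆
                  Finset.univ.filter (fun i : Fin n =>
                    l + f t' * m ≤ i.val ∧ i.val < l + f t' * m + m) := by
                intro i hi
                simp only [Finset.mem_filter, Finset.mem_univ, true_and]
                rcases Finset.mem_union.mp hi with hi | hi
                · exact h1 i hi
                · exact h2 i hi
              have hcard := le_trans (Finset.card_le_card hsubD)
                (card_val_interval_le n (l + f t' * m) m)
              rw [Finset.card_union_of_disjoint (hBB t t' htt), hB, hB] at hcard
              omega
        _ = j := Finset.card_range j
    omega

end S2

theorem statement_2 (n ℓ m : ℕ) (hn : 1 ≤ n) (hℓ : 2 ≤ ℓ) (hm : 2 ≤ m)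
    (l j l' j' : ℤ) (hl : 0 ≤ l) (hj : 0 ≤ j) (hl' : 0 ≤ l') (hj' : 0 ≤ j')
    (hlj : l + j * m ≤ n) (hlj' : l' + j' * m ≤ n) :
    Xset n ℓ m l' j' ⊂ Xset n ℓ m l j ↔
      Xset n ℓ m l' j' ⊆
        Xset n ℓ m (l + 1) j ∪ Xset n ℓ m l (j + 1) ∪ Xset n ℓ m (l + m) (j - 1) := by
  lift l to ℕ using hl with la
  lift j to ℕ using hj with ja
  lift l' to ℕ using hl' with lb
  lift j' to ℕ using hj' with jb
  have hmem1 : la + ja * m ≤ n := by exact_mod_cast hlj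
  have hmem2 : lb + jb * m ≤ n := by exact_mod_cast hlj'
  have hm1 : 1 ≤ m := by omega
  have hℓ1 : 1 ≤ ℓ := by omega
  have e0 : Xset n ℓ m (la : ℤ) (ja : ℤ) = S2.XN n ℓ m la ja := S2.Xset_cast n ℓ m la ja
  have e1 : Xset n ℓ m (lb : ℤ) (jb : ℤ) = S2.XN n ℓ m lb jb := S2.Xset_cast n ℓ m lb jb
  have e2 : Xset n ℓ m ((la : ℤ) + 1) (ja : ℤ) = S2.XN n ℓ m (la + 1) ja := by
    rw [show ((la : ℤ) + 1) = ((la + 1 : ℕ) : ℤ) by push_cast; ring]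
    exact S2.Xset_cast n ℓ m (la + 1) ja
  have e3 : Xset n ℓ m (la : ℤ) ((ja : ℤ) + 1) = S2.XN n ℓ m la (ja + 1) := by
    rw [show ((ja : ℤ) + 1) = ((ja + 1 : ℕ) : ℤ) by push_cast; ring]
    exact S2.Xset_cast n ℓ m la (ja + 1)
  have e4 : 1 ≤ ja → Xset n ℓ m ((la : ℤ) + m) ((ja : ℤ) - 1) =
      S2.XN n ℓ m (la + m) (ja - 1) := by
    intro hja
    rw [show ((la : ℤ) + m) = ((la + m : ℕ) : ℤ) by push_cast; ring,
      show ((ja : ℤ) - 1) = ((ja - 1 : ℕ) : ℤ) by omega]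
    exact S2.Xset_cast n ℓ m (la + m) (ja - 1)
  rw [e0, e1, e2, e3]
  constructor
  · intro hss
    rw [Set.ssubset_iff_subset_ne] at hss
    obtain ⟨s, hs1, hs2⟩ := S2.gp_anal n ℓ m lb jb la ja hℓ1 hm
      (hss.1 (S2.gp_mem n ℓ m lb jb hm1 hmem2))
    rcases Nat.lt_or_ge (la + s * m) lb with hcase | hcase
    · intro x hx
      left; left
      exact S2.XN_chain n ℓ m s lb jb (la + 1) ja (by omega) hs2 hx
    · have heq : la + s * m = lb := le_antisymm hs1 hcase
      rcases Nat.lt_or_ge ja (jb + s) with hj2 | hj2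
      · intro x hx
        left; right
        exact S2.XN_chain n ℓ m s lb jb la (ja + 1) (by omega) (by omega) hx
      · have heqj : ja = jb + s := le_antisymm hs2 hj2
        rcases Nat.eq_zero_or_pos s with hs0 | hs0
        · exfalso
          rw [hs0, Nat.zero_mul] at heq
          have h1 : lb = la := by omega
          have h2 : jb = ja := by omega
          exact hss.2 (by rw [h1, h2])
        · intro x hx
          right
          rw [e4 (by omega)]
          obtain ⟨s', rfl⟩ : ∃ s', s = s' + 1 := ⟨s - 1, by omega⟩
          have harith : (la + m) + s' * m = lb := by
            rw [Nat.succ_mul] at heq; omega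
          exact S2.XN_chain n ℓ m s' lb jb (la + m) (ja - 1)
            (by omega) (by omega) hx
  · intro hsub
    rw [Set.ssubset_iff_subset_ne]
    constructor
    · intro x hx
      rcases hsub hx with (h | h) | h
      · exact S2.XN_chain n ℓ m 0 (la + 1) ja la ja (by omega) (by omega) h
      · exact S2.XN_chain n ℓ m 0 la (ja + 1) la ja (by omega) (by omega) h
      · rcases Nat.eq_zero_or_pos ja with hja | hja
        · exfalso
          rw [hja] at h
          rw [S2.Xset_neg n ℓ m _ _ (by simp : (((0 : ℕ) : ℤ)) - 1 < 0)] at h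
          exact h
        · rw [e4 hja] at h
          exact S2.XN_chain n ℓ m 1 (la + m) (ja - 1) la ja (by omega) (by omega) h
    · intro heq2
      have hg : S2.gp n la ja m ∈ S2.XN n ℓ m lb jb := by
        rw [heq2]; exact S2.gp_mem n ℓ m la ja hm1 hmem1
      rcases hsub hg with (h | h) | h
      · obtain ⟨s, h1, h2⟩ := S2.gp_anal n ℓ m la ja (la + 1) ja hℓ1 hm h
        have := Nat.zero_le (s * m)
        omega
      · obtain ⟨s, h1, h2⟩ := S2.gp_anal n ℓ m la ja la (ja + 1) hℓ1 hm h
        have hs1 : 1 ≤ s := by omega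
        have := Nat.le_mul_of_pos_right s hm1
        omega
      · rcases Nat.eq_zero_or_pos ja with hja | hja
        · rw [hja] at h
          rw [S2.Xset_neg n ℓ m _ _ (by simp : (((0 : ℕ) : ℤ)) - 1 < 0)] at h
          exact h
        · rw [e4 hja] at h
          obtain ⟨s, h1, h2⟩ := S2.gp_anal n ℓ m la ja (la + m) (ja - 1) hℓ1 hm h
          have := Nat.zero_le (s * m)
          omega
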